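/- Let p > 0, φ > 0, and let w : (0,∞) → (0,∞) be a measurable log-convex function such that there exist C > 0 and 0 ≤ λ < φ with w(x) ≤ C e^{λx} for all x > 0. Then the function x ↦ p ∫₀^∞ e^{-φy} w(x+y) dy is finite, positive, and log-convex on (0,∞). -/

import Mathlib

open MeasureTheory
open scoped ENNReal

/-- For p > 0, φ > 0 and w measurable, positive and log-convex
on (0,∞) with w(x) ≤ C e^{λx} (0 ≤ λ < φ), the function
x ↦ p ∫₀^∞ e^{-φy} w(x+y) dy is finite, positive and log-convex on (0,∞). -/
theorem Zprime_logConvex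
    (p φ : ℝ) (hp : 0 < p) (hφ : 0 < φ)
    (w : ℝ → ℝ) (hwmeas : Measurable w)
    (hwpos : ∀ x > (0 : ℝ), 0 < w x)
    (hwlc : ∀ x₁ > (0 : ℝ), ∀ x₂ > (0 : ℝ), ∀ t ∈ Set.Icc (0 : ℝ) 1,
      w (t * x₁ + (1 - t) * x₂) ≤ w x₁ ^ t * w x₂ ^ (1 - t))
    (C lam : ℝ) (hC : 0 < C) (hlam0 : 0 ≤ lam) (hlamφ : lam < φ)
    (hwbound : ∀ x > (0 : ℝ), w x ≤ C * Real.exp (lam * x))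
    (F : ℝ → ℝ)
    (hF : ∀ x, F x = p * ∫ y in Set.Ioi (0 : ℝ), Real.exp (-φ * y) * w (x + y)) :
    (∀ x > (0 : ℝ),
      IntegrableOn (fun y => Real.exp (-φ * y) * w (x + y)) (Set.Ioi 0) ∧ 0 < F x) ∧
    ∀ x₁ > (0 : ℝ), ∀ x₂ > (0 : ℝ), ∀ t ∈ Set.Icc (0 : ℝ) 1,
      F (t * x₁ + (1 - t) * x₂) ≤ F x₁ ^ t * F x₂ ^ (1 - t) := by
  set g : ℝ → ℝ → ℝ := fun x y => Real.exp (-φ * y) * w (x + y) with hgdef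
  have hg_meas : ∀ x : ℝ, Measurable (g x) := fun x =>
    (Real.measurable_exp.comp (measurable_const.mul measurable_id)).mul
      (hwmeas.comp (measurable_const.add measurable_id))
  have hg_pos : ∀ x > (0:ℝ), ∀ y ∈ Set.Ioi (0:ℝ), 0 < g x y := by
    intro x hx y hy
    simp only [Set.mem_Ioi] at hy
    exact mul_pos (Real.exp_pos _) (hwpos _ (by linarith))
  have hInt : ∀ x > (0:ℝ), IntegrableOn (g x) (Set.Ioi 0) := by
    intro x hx
    have hdom : IntegrableOn (fun y => (C * Real.exp (lam * x)) * Real.exp (-(φ - lam) * y))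
        (Set.Ioi 0) :=
      (exp_neg_integrableOn_Ioi 0 (by linarith)).const_mul _
    refine Integrable.mono' hdom ((hg_meas x).aestronglyMeasurable) ?_
    filter_upwards [ae_restrict_mem measurableSet_Ioi] with y hy
    simp only [Set.mem_Ioi] at hy
    have hxy : 0 < x + y := by linarith
    rw [Real.norm_of_nonneg (hg_pos x hx y (Set.mem_Ioi.2 hy)).le]
    calc g x y ≤ Real.exp (-φ * y) * (C * Real.exp (lam * (x + y))) :=
          mul_le_mul_of_nonneg_left (hwbound _ hxy) (Real.exp_pos _).le
      _ = C * Real.exp (lam * x) * Real.exp (-(φ - lam) * y) := by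
          rw [mul_assoc C, ← Real.exp_add,
            show lam * x + -(φ - lam) * y = -φ * y + lam * (x + y) by ring, Real.exp_add]
          ring
  have hIpos : ∀ x > (0:ℝ), 0 < ∫ y in Set.Ioi (0:ℝ), g x y := by
    intro x hx
    refine (setIntegral_pos_iff_support_of_nonneg_ae ?_ (hInt x hx)).2 ?_
    · filter_upwards [ae_restrict_mem measurableSet_Ioi] with y hy
      exact (hg_pos x hx y hy).le
    · have hsub : Set.Ioi (0:ℝ) ⊆ Function.support (g x) ∩ Set.Ioi 0 :=
        fun y hy => ⟨ne_of_gt (hg_pos x hx y hy), hy⟩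
      have hm := measure_mono (μ := volume) hsub
      rw [Real.volume_Ioi] at hm
      exact lt_of_lt_of_le (by simp) hm
  have hFpos : ∀ x > (0:ℝ), 0 < F x := fun x hx => by
    rw [hF x]; exact mul_pos hp (hIpos x hx)
  refine ⟨fun x hx => ⟨hInt x hx, hFpos x hx⟩, ?_⟩
  intro x₁ hx₁ x₂ hx₂ t ht
  obtain ⟨ht0, ht1⟩ := ht
  rcases eq_or_lt_of_le ht0 with h0 | h0
  · rw [← h0]
    simp
  rcases eq_or_lt_of_le ht1 with h1 | h1
  · rw [h1]
    simp
  -- main case 0 < t < 1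
  have h1t : (0:ℝ) < 1 - t := by linarith
  have e : Real.HolderConjugate (1 / t) (1 / (1 - t)) :=
    Real.holderConjugate_one_div h0 h1t (by ring)
  -- membership in Lp
  have f_mem : ∀ x c : ℝ, 0 < x → 0 < c →
      MemLp (fun y => g x y ^ c) (ENNReal.ofReal (1 / c)) (volume.restrict (Set.Ioi 0)) := by
    intro x c hx hc
    have A : ENNReal.ofReal (1 / c) ≠ 0 := by
      rwa [Ne, ENNReal.ofReal_eq_zero, not_le, one_div_pos]
    have B : ENNReal.ofReal (1 / c) ≠ ⊤ := ENNReal.ofReal_ne_top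
    have hmeas : AEStronglyMeasurable (fun y => g x y ^ c) (volume.restrict (Set.Ioi 0)) :=
      (show Measurable fun y => g x y ^ c by measurability).aestronglyMeasurable
    rw [← memLp_norm_rpow_iff hmeas A B, ENNReal.toReal_ofReal (one_div_nonneg.mpr hc.le),
      ENNReal.div_self A B, memLp_one_iff_integrable]
    apply Integrable.congr (hInt x hx)
    filter_upwards [ae_restrict_mem measurableSet_Ioi] with y hy
    have hgy := (hg_pos x hx y hy).le
    rw [Real.norm_of_nonneg (Real.rpow_nonneg hgy c), ← Real.rpow_mul hgy,
      mul_one_div_cancel hc.ne', Real.rpow_one]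
  have hf1 := f_mem x₁ t hx₁ h0
  have hf2 := f_mem x₂ (1 - t) hx₂ h1t
  have hnn1 : 0 ≤ᵐ[volume.restrict (Set.Ioi 0)] fun y => g x₁ y ^ t := by
    filter_upwards [ae_restrict_mem measurableSet_Ioi] with y hy
    exact Real.rpow_nonneg (hg_pos x₁ hx₁ y hy).le t
  have hnn2 : 0 ≤ᵐ[volume.restrict (Set.Ioi 0)] fun y => g x₂ y ^ (1 - t) := by
    filter_upwards [ae_restrict_mem measurableSet_Ioi] with y hy
    exact Real.rpow_nonneg (hg_pos x₂ hx₂ y hy).le (1 - t)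
  have key := MeasureTheory.integral_mul_le_Lp_mul_Lq_of_nonneg e hnn1 hnn2 hf1 hf2
  have hR1 : ∫ y in Set.Ioi (0:ℝ), (g x₁ y ^ t) ^ (1 / t) = ∫ y in Set.Ioi (0:ℝ), g x₁ y :=
    setIntegral_congr_fun measurableSet_Ioi fun y hy => by
      rw [← Real.rpow_mul (hg_pos x₁ hx₁ y hy).le, mul_one_div_cancel h0.ne', Real.rpow_one]
  have hR2 : ∫ y in Set.Ioi (0:ℝ), (g x₂ y ^ (1 - t)) ^ (1 / (1 - t))
      = ∫ y in Set.Ioi (0:ℝ), g x₂ y :=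
    setIntegral_congr_fun measurableSet_Ioi fun y hy => by
      rw [← Real.rpow_mul (hg_pos x₂ hx₂ y hy).le, mul_one_div_cancel h1t.ne', Real.rpow_one]
  rw [hR1, hR2, one_div_one_div, one_div_one_div] at key
  -- integrability of the product
  have hcond : (1:ℝ≥0∞) / 1 = 1 / ENNReal.ofReal (1 / t) + 1 / ENNReal.ofReal (1 / (1 - t)) := by
    rw [one_div (ENNReal.ofReal (1 / t)), one_div (ENNReal.ofReal (1 / (1 - t))),
      ← ENNReal.ofReal_inv_of_pos (by positivity), ← ENNReal.ofReal_inv_of_pos (by positivity),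
      one_div t, one_div (1 - t), inv_inv, inv_inv, ← ENNReal.ofReal_add h0.le h1t.le]
    simp
  have hprodInt : Integrable (fun y => g x₁ y ^ t * g x₂ y ^ (1 - t))
      (volume.restrict (Set.Ioi 0)) := by
    have hsm := hf2.smul hf1 (r := 1) (hpqr := ⟨by simpa [one_div] using hcond.symm⟩)
    rw [memLp_one_iff_integrable] at hsm
    exact hsm
  -- pointwise bound from log-convexity
  have hmono : (∫ y in Set.Ioi (0:ℝ), g (t * x₁ + (1 - t) * x₂) y)
      ≤ ∫ y in Set.Ioi (0:ℝ), g x₁ y ^ t * g x₂ y ^ (1 - t) := by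
    refine integral_mono_of_nonneg ?_ hprodInt ?_
    · filter_upwards [ae_restrict_mem measurableSet_Ioi] with y hy
      exact (hg_pos _ (by positivity) y hy).le
    · filter_upwards [ae_restrict_mem measurableSet_Ioi] with y hy
      simp only [Set.mem_Ioi] at hy
      have h1y : 0 < x₁ + y := by linarith
      have h2y : 0 < x₂ + y := by linarith
      have hw := hwlc (x₁ + y) h1y (x₂ + y) h2y t ⟨ht0, ht1⟩
      calc g (t * x₁ + (1 - t) * x₂) y
          = Real.exp (-φ * y) * w (t * (x₁ + y) + (1 - t) * (x₂ + y)) := by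
            rw [hgdef]
            have : t * x₁ + (1 - t) * x₂ + y = t * (x₁ + y) + (1 - t) * (x₂ + y) := by ring
            simp only [this]
        _ ≤ Real.exp (-φ * y) * (w (x₁ + y) ^ t * w (x₂ + y) ^ (1 - t)) :=
            mul_le_mul_of_nonneg_left hw (Real.exp_pos _).le
        _ = g x₁ y ^ t * g x₂ y ^ (1 - t) := by
            rw [hgdef]
            simp only
            rw [Real.mul_rpow (Real.exp_pos _).le (hwpos _ h1y).le,
              Real.mul_rpow (Real.exp_pos _).le (hwpos _ h2y).le,
              ← Real.exp_mul, ← Real.exp_mul]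
            have hexp : Real.exp (-φ * y * t) * Real.exp (-φ * y * (1 - t))
                = Real.exp (-φ * y) := by
              rw [← Real.exp_add]; congr 1; ring
            calc Real.exp (-φ * y) * (w (x₁ + y) ^ t * w (x₂ + y) ^ (1 - t))
                = (Real.exp (-φ * y * t) * Real.exp (-φ * y * (1 - t)))
                    * (w (x₁ + y) ^ t * w (x₂ + y) ^ (1 - t)) := by rw [hexp]
              _ = Real.exp (-φ * y * t) * w (x₁ + y) ^ t
                    * (Real.exp (-φ * y * (1 - t)) * w (x₂ + y) ^ (1 - t)) := by ring
  -- assemble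
  have hI1 := hIpos x₁ hx₁
  have hI2 := hIpos x₂ hx₂
  rw [hF, hF, hF]
  calc p * ∫ y in Set.Ioi (0:ℝ), g (t * x₁ + (1 - t) * x₂) y
      ≤ p * ((∫ y in Set.Ioi (0:ℝ), g x₁ y) ^ t * (∫ y in Set.Ioi (0:ℝ), g x₂ y) ^ (1 - t)) :=
        mul_le_mul_of_nonneg_left (hmono.trans key) hp.le
    _ = (p * ∫ y in Set.Ioi (0:ℝ), g x₁ y) ^ t
          * (p * ∫ y in Set.Ioi (0:ℝ), g x₂ y) ^ (1 - t) := by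
        rw [Real.mul_rpow hp.le hI1.le, Real.mul_rpow hp.le hI2.le]
        have hps : p ^ t * p ^ (1 - t) = p := by
          rw [← Real.rpow_add hp]; norm_num
        have hring : p ^ t * (∫ y in Set.Ioi (0:ℝ), g x₁ y) ^ t
            * (p ^ (1 - t) * (∫ y in Set.Ioi (0:ℝ), g x₂ y) ^ (1 - t))
            = (p ^ t * p ^ (1 - t))
              * ((∫ y in Set.Ioi (0:ℝ), g x₁ y) ^ t
                  * (∫ y in Set.Ioi (0:ℝ), g x₂ y) ^ (1 - t)) := by ring
        rw [hring, hps]
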